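/- The function φ is strictly decreasing on the interval (0, 1/√3), and lim_{x → 0⁺} φ(x) = 1. -/
import Mathlib


open Filter Set

/-- `φ(x) = ((1 - x)/(1 + x)) · exp(x/(1 - x²))`. -/
noncomputable def phi (x : ℝ) : ℝ :=
  (1 - x) / (1 + x) * Real.exp (x / (1 - x ^ 2))

lemma phi_hasDerivAt {x : ℝ} (hx1 : -1 < x) (hx2 : x < 1) :
    HasDerivAt phi ((3 * x ^ 2 - 1) * Real.exp (x / (1 - x ^ 2)) /
      ((1 + x) ^ 3 * (1 - x))) x := by
  have h1p : (1 : ℝ) + x ≠ 0 := by nlinarith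
  have h1m : (1 : ℝ) - x ≠ 0 := by nlinarith
  have hsq : (1 : ℝ) - x ^ 2 ≠ 0 := by nlinarith
  have hf : HasDerivAt (fun y : ℝ => (1 - y) / (1 + y))
      (((-1) * (1 + x) - (1 - x) * 1) / (1 + x) ^ 2) x := by
    exact (((hasDerivAt_id x).const_sub 1).div ((hasDerivAt_id x).const_add 1) h1p)
  have hg : HasDerivAt (fun y : ℝ => y / (1 - y ^ 2))
      ((1 * (1 - x ^ 2) - x * (-(2 * x ^ 1))) / (1 - x ^ 2) ^ 2) x := by
    exact (hasDerivAt_id x).div (((hasDerivAt_pow 2 x).const_sub 1)) hsq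
  have he := hg.exp
  have hmul := hf.mul he
  have : HasDerivAt phi
      ((((-1) * (1 + x) - (1 - x) * 1) / (1 + x) ^ 2) * Real.exp (x / (1 - x ^ 2)) +
        (1 - x) / (1 + x) *
          (Real.exp (x / (1 - x ^ 2)) * ((1 * (1 - x ^ 2) - x * (-(2 * x ^ 1))) / (1 - x ^ 2) ^ 2))) x := by
    exact hmul
  convert this using 1
  have hexp : Real.exp (x / (1 - x ^ 2)) ≠ 0 := Real.exp_ne_zero _
  field_simp
  ring

theorem phi_monotone :
    StrictAntiOn phi (Set.Ioo 0 (1 / Real.sqrt 3)) ∧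
    Tendsto phi (nhdsWithin 0 (Set.Ioi 0)) (nhds 1) := by
  have hs3 : (0:ℝ) < Real.sqrt 3 := Real.sqrt_pos.mpr (by norm_num)
  have hlt1 : 1 / Real.sqrt 3 < 1 := by
    rw [div_lt_one hs3]
    nlinarith [Real.sq_sqrt (by norm_num : (3:ℝ) ≥ 0), Real.sqrt_nonneg 3]
  constructor
  · apply strictAntiOn_of_deriv_neg (convex_Ioo _ _)
    · intro x hx
      exact (phi_hasDerivAt (by linarith [hx.1]) (lt_trans hx.2 hlt1)).continuousAt.continuousWithinAt
    · intro x hx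
      rw [interior_Ioo] at hx
      obtain ⟨hx0, hxu⟩ := hx
      have hx1 : x < 1 := lt_trans hxu hlt1
      rw [(phi_hasDerivAt (by linarith) hx1).deriv]
      have hnum : 3 * x ^ 2 - 1 < 0 := by
        have : x ^ 2 < (1 / Real.sqrt 3) ^ 2 := by
          apply pow_lt_pow_left₀ hxu hx0.le
          norm_num
        have h3 : (1 / Real.sqrt 3) ^ 2 = 1 / 3 := by
          rw [div_pow, one_pow, Real.sq_sqrt (by norm_num : (3:ℝ) ≥ 0)]
        nlinarith
      have hden : 0 < (1 + x) ^ 3 * (1 - x) :=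
        mul_pos (pow_pos (by linarith) 3) (by linarith)
      have hexp : 0 < Real.exp (x / (1 - x ^ 2)) := Real.exp_pos _
      exact div_neg_of_neg_of_pos (mul_neg_of_neg_of_pos hnum hexp) hden
  · have hc : ContinuousAt phi 0 :=
      (phi_hasDerivAt (by norm_num) (by norm_num)).continuousAt
    have h0 : phi 0 = 1 := by simp [phi]
    have := hc.continuousWithinAt (s := Set.Ioi 0)
    rw [ContinuousWithinAt, h0] at this
    exact this
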